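/- Let n = 4k + 2 > 2 and a = 2k. If b, c are positive integers with a+b+c = n such that the permutation p(a,b,c) (defined by p_i = n+1-i for 1 ≤ i ≤ a, p_i = a+b+1-i for a+1 ≤ i ≤ a+b, p_i = n+b+1-i for a+b+1 ≤ i ≤ n) is a cyclic permutation, then b and c are both even. -/

import Mathlib

/-- A permutation of {1,...,n} is cyclic (a single n-cycle) iff it acts transitively. -/
def IsCyclicPerm {n : ℕ} (p : Equiv.Perm (Fin n)) : Prop :=
  ∀ x y : Fin n, ∃ m : ℕ, (p ^ m) x = y

/-- `p` contains the pattern `q` (given as a word `q 0, q 1, ...`). -/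
def Contains {n k : ℕ} (p : Equiv.Perm (Fin n)) (q : Fin k → Fin k) : Prop :=
  ∃ f : Fin k → Fin n, StrictMono f ∧ ∀ i j : Fin k, q i < q j ↔ p (f i) < p (f j)

def Avoids {n k : ℕ} (p : Equiv.Perm (Fin n)) (q : Fin k → Fin k) : Prop :=
  ¬ Contains p q

def pat123 : Fin 3 → Fin 3 := ![0, 1, 2]
def pat231 : Fin 3 → Fin 3 := ![1, 2, 0]
def pat132 : Fin 3 → Fin 3 := ![0, 2, 1]
def pat321 : Fin 3 → Fin 3 := ![2, 1, 0]
def pat312 : Fin 3 → Fin 3 := ![2, 0, 1]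

/-- `p` is the three-layer permutation of the triple `(a,b,c)`, in 0-based form:
`p_i = n+1-i` for `1 ≤ i ≤ a`, `p_i = a+b+1-i` for `a+1 ≤ i ≤ a+b`,
`p_i = n+b+1-i` for `a+b+1 ≤ i ≤ n` (1-based). -/
def IsTriplePerm (n a b : ℕ) (p : Equiv.Perm (Fin n)) : Prop :=
  ∀ i : Fin n, (p i : ℕ) =
    if (i : ℕ) < a then n - 1 - (i : ℕ)
    else if (i : ℕ) < a + b then a + b - 1 - (i : ℕ)
    else n + b - 1 - (i : ℕ)

/-- The pairing equivalence `Fin m × Bool ≃ Fin (2m)` sending `(i, false) ↦ i`,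
`(i, true) ↦ 2m-1-i`. -/
def pairEquiv (m : ℕ) : Fin m × Bool ≃ Fin (2 * m) where
  toFun x := if x.2 then ⟨2 * m - 1 - (x.1 : ℕ), by omega⟩ else ⟨(x.1 : ℕ), by omega⟩
  invFun j := if h : (j : ℕ) < m then (⟨(j : ℕ), h⟩, false)
    else (⟨2 * m - 1 - (j : ℕ), by omega⟩, true)
  left_inv := by
    rintro ⟨⟨i, hi⟩, b⟩
    cases b
    · dsimp only
      rw [if_neg (by simp), dif_pos hi]
    · dsimp only
      rw [if_pos rfl, dif_neg (by simp; omega)]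
      refine Prod.ext (Fin.ext ?_) rfl
      simp; omega
  right_inv := by
    rintro ⟨j, hj⟩
    dsimp only
    by_cases h : j < m
    · rw [dif_pos h, if_neg (by simp)]
    · rw [dif_neg h, if_pos rfl]
      refine Fin.ext ?_
      simp; omega

lemma sign_revPerm_even (n m : ℕ) (hnm : n = 2 * m) :
    Equiv.Perm.sign (Fin.revPerm : Equiv.Perm (Fin n)) = (-1) ^ m := by
  subst hnm
  have h := Equiv.Perm.sign_eq_sign_of_equiv
    (Equiv.prodCongrRight fun _ : Fin m => Equiv.swap false true)
    (Fin.revPerm : Equiv.Perm (Fin (2 * m))) (pairEquiv m) ?_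
  · rw [← h, Equiv.Perm.sign_prodCongrRight]
    simp [Equiv.Perm.sign_swap (by decide : (false : Bool) ≠ true)]
  · rintro ⟨⟨i, hi⟩, b⟩
    cases b <;>
      simp [pairEquiv, Equiv.prodCongrRight, Equiv.swap_apply_of_ne_of_ne,
        Fin.ext_iff, Fin.rev] <;> omega

open Fin.NatCast Fin.CommRing in
lemma finRotate_pow (m t : ℕ) (j : Fin (m + 1)) :
    ((finRotate (m + 1)) ^ t) j = j + (t : Fin (m + 1)) := by
  induction t with
  | zero => simp
  | succ t ih =>
    rw [pow_succ', Equiv.Perm.mul_apply, finRotate_succ_apply, ih]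
    push_cast
    ring

def blockEquiv (k : ℕ) : Fin (2 * k) ⊕ Fin (2 * k + 1 + 1) ≃ Fin (4 * k + 2) :=
  finSumFinEquiv.trans (finCongr (by omega))

lemma blockEquiv_inl (k : ℕ) (i : Fin (2 * k)) :
    (blockEquiv k (Sum.inl i) : ℕ) = (i : ℕ) := rfl

lemma blockEquiv_inr (k : ℕ) (j : Fin (2 * k + 1 + 1)) :
    (blockEquiv k (Sum.inr j) : ℕ) = 2 * k + (j : ℕ) := rfl

theorem stmt13 (n k a b c : ℕ) (hn : n = 4 * k + 2) (hn2 : 2 < n) (ha : a = 2 * k)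
    (hb : 0 < b) (hc : 0 < c) (habc : a + b + c = n)
    (p : Equiv.Perm (Fin n)) (hp : IsTriplePerm n a b p) (hcyc : IsCyclicPerm p) :
    Even b ∧ Even c := by
  subst hn ha
  have hk : 1 ≤ k := by omega
  have hbc : b + c = 2 * k + 2 := by omega
  -- p has no fixed point
  have hfix : ∀ x : Fin (4 * k + 2), p x ≠ x := by
    intro x hx
    have h1 : (1 : Fin (4 * k + 2)) ≠ x ∨ (0 : Fin (4 * k + 2)) ≠ x := by
      rcases eq_or_ne (0 : Fin (4 * k + 2)) x with h | h
      · left; rw [← h]; simp [Fin.ext_iff]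
      · right; exact h
    rcases h1 with h | h
    · obtain ⟨m, hm⟩ := hcyc x 1
      rw [Equiv.Perm.pow_apply_eq_self_of_apply_eq_self hx] at hm
      exact h hm.symm
    · obtain ⟨m, hm⟩ := hcyc x 0
      rw [Equiv.Perm.pow_apply_eq_self_of_apply_eq_self hx] at hm
      exact h hm.symm
  -- p is a cycle with full support
  have hx0 : (0 : ℕ) < 4 * k + 2 := by omega
  have hcycle : p.IsCycle := by
    refine ⟨⟨0, hx0⟩, hfix _, fun y _ => ?_⟩
    obtain ⟨m, hm⟩ := hcyc ⟨0, hx0⟩ y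
    exact ⟨(m : ℤ), by rwa [zpow_natCast]⟩
  have hsupp : p.support = Finset.univ :=
    Finset.eq_univ_iff_forall.mpr fun x => Equiv.Perm.mem_support.mpr (hfix x)
  have hsign : Equiv.Perm.sign p = -1 := by
    rw [hcycle.sign, hsupp]
    simp [pow_succ, pow_mul]
  -- decompose p = revPerm * q
  set q : Equiv.Perm (Fin (4 * k + 2)) := Fin.revPerm * p with hq
  have hqval : ∀ i : Fin (4 * k + 2), (q i : ℕ) =
      if (i : ℕ) < 2 * k then (i : ℕ)
      else if (i : ℕ) < 2 * k + b then (i : ℕ) + c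
      else (i : ℕ) - b := by
    intro i
    have hpi := hp i
    have hilt := i.isLt
    have hplt := (p i).isLt
    simp only [hq, Equiv.Perm.mul_apply, Fin.revPerm_apply, Fin.val_rev]
    split_ifs at hpi ⊢ <;> omega
  -- sign q = (-1)^c
  have hsignq : Equiv.Perm.sign q = (-1) ^ c := by
    have h := Equiv.Perm.sign_eq_sign_of_equiv
      (Equiv.Perm.sumCongr 1 ((finRotate (2 * k + 1 + 1)) ^ c)) q (blockEquiv k) ?_
    · rw [← h, Equiv.Perm.sign_sumCongr, map_pow, Equiv.Perm.sign_one, one_mul,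
        sign_finRotate]
      have hodd : Odd (2 * k + 1) := Nat.odd_iff.mpr (by omega)
      rw [Nat.add_sub_cancel, hodd.neg_one_pow]
    · rintro (i | j)
      · apply Fin.ext
        rw [Equiv.Perm.sumCongr_apply, Sum.map_inl, Equiv.Perm.one_apply, hqval,
          blockEquiv_inl, if_pos i.isLt]
      · apply Fin.ext
        rw [Equiv.Perm.sumCongr_apply, Sum.map_inr, finRotate_pow, hqval,
          blockEquiv_inr, blockEquiv_inr, Fin.val_add, Fin.val_natCast,
          Nat.mod_eq_of_lt (show c < 2 * k + 1 + 1 by omega)]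
        have hj := j.isLt
        rcases lt_or_ge (j : ℕ) b with hjb | hjb
        · rw [if_neg (by omega), if_pos (by omega), Nat.mod_eq_of_lt (by omega)]
          omega
        · rw [if_neg (by omega), if_neg (by omega),
            (by omega : (j : ℕ) + c = ((j : ℕ) - b) + 1 * (2 * k + 1 + 1)),
            Nat.add_mul_mod_self_right, Nat.mod_eq_of_lt (by omega)]
          omega
  -- combine signs
  have hrev : Fin.revPerm * q = p := by
    have hrr : (Fin.revPerm : Equiv.Perm (Fin (4 * k + 2))) * Fin.revPerm = 1 := by
      ext x
      simp [Fin.rev_rev]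
    rw [hq, ← mul_assoc, hrr, one_mul]
  have hc2 : ((-1 : ℤˣ)) ^ c = 1 := by
    have := congrArg Equiv.Perm.sign hrev
    rw [map_mul, hsignq, hsign, sign_revPerm_even (4 * k + 2) (2 * k + 1) (by omega)] at this
    have hodd : ((-1 : ℤˣ)) ^ (2 * k + 1) = -1 := Odd.neg_one_pow ⟨k, by omega⟩
    rw [hodd] at this
    rw [neg_one_mul] at this
    exact neg_injective this
  have hce : Even c := by
    by_contra hco
    rw [Nat.not_even_iff_odd] at hco
    rw [hco.neg_one_pow] at hc2
    exact absurd hc2 (by decide)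
  refine ⟨?_, hce⟩
  rw [Nat.even_iff] at hce ⊢
  omega
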